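/- Let n ≥ 2, let x_1 < x_2 < … < x_n be reals, r_1, …, r_n > 0, and ζ_1, …, ζ_{n-1} ∈ ℍ. Define f(x) = -∑_{k=1}^n r_k/(x - x_k), Q(x) = ∏_{k=1}^n (x - x_k), and P(x) = ∏_{j=1}^{n-1} (x - ζ_j)(x - conj(ζ_j)). Then the following are equivalent: (i) Q(x)²·f'(x) = (∑_{k=1}^n r_k)·P(x) for all real x distinct from x_1, …, x_n (i.e., f has critical points precisely ζ_1, …, ζ_{n-1} and their conjugates, with multiplicity); (ii) there exist a real polynomial R of exact degree 2n-4 and a constant c > 0 such that P·Q'' - P'·Q' + R·Q = 0 and r_k = c·P(x_k)/∏_{j≠k}(x_k - x_j)² for every k = 1, …, n. -/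

import Mathlib

open Polynomial Finset Complex ComplexConjugate

private lemma sq_dvd_aux {p : ℝ[X]} {a : ℝ} (h0 : p.eval a = 0)
    (h1 : (derivative p).eval a = 0) : (X - C a) ^ 2 ∣ p := by
  obtain ⟨q, hq⟩ := dvd_iff_isRoot.2 h0
  have hq' : (X - C a) ∣ q := by
    refine dvd_iff_isRoot.2 ?_
    have hd := congrArg derivative hq
    rw [derivative_mul, derivative_sub, derivative_X, derivative_C, sub_zero, one_mul] at hd
    have h2 := congrArg (Polynomial.eval a) hd
    rw [h1] at h2
    simpa [Polynomial.IsRoot] using h2.symm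
  obtain ⟨q2, hq2⟩ := hq'
  exact ⟨q2, by rw [hq, hq2]; ring⟩

private lemma deriv_aux {n : ℕ} (x r : Fin n → ℝ) {s : ℝ} (hs : ∀ k, s ≠ x k) :
    deriv (fun s => -∑ k, r k / (s - x k)) s = ∑ k, r k / (s - x k) ^ 2 := by
  have h : HasDerivAt (fun s : ℝ => ∑ k, r k / (s - x k)) (∑ k, -(r k / (s - x k) ^ 2)) s := by
    refine HasDerivAt.fun_sum fun k _ => ?_
    have h1 : HasDerivAt (fun t : ℝ => t - x k) 1 s := (hasDerivAt_id s).sub_const _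
    have h2 : s - x k ≠ 0 := sub_ne_zero.2 (hs k)
    have h3 := (h1.inv h2).const_mul (r k)
    have he : r k * (-1 / (s - x k) ^ 2) = -(r k / (s - x k) ^ 2) := by ring
    rw [he] at h3
    simpa [div_eq_mul_inv] using h3
  rw [h.fun_neg.deriv, Finset.sum_neg_distrib, neg_neg]

theorem critical_points_iff_van_vleck
    (n : ℕ) (hn : 2 ≤ n) (x : Fin n → ℝ) (hx : StrictMono x)
    (r : Fin n → ℝ) (hr : ∀ k, 0 < r k)
    (ζ : Fin (n - 1) → ℂ) (hζ : ∀ j, 0 < (ζ j).im)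
    (f : ℝ → ℝ) (hf : f = fun s => -∑ k, r k / (s - x k))
    (Q : Polynomial ℝ) (hQ : Q = ∏ k, (X - C (x k)))
    (P : Polynomial ℝ)
    (hP : P.map (algebraMap ℝ ℂ) = ∏ j, (X - C (ζ j)) * (X - C (conj (ζ j)))) :
    (∀ s : ℝ, (∀ k, s ≠ x k) →
        (Q.eval s) ^ 2 * deriv f s = (∑ k, r k) * P.eval s)
    ↔
    (∃ (R : Polynomial ℝ) (c : ℝ), R.degree = (2 * n - 4 : ℕ) ∧ 0 < c ∧
      P * derivative (derivative Q) - derivative P * derivative Q + R * Q = 0 ∧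
      ∀ k, r k = c * P.eval (x k) / ∏ j ∈ Finset.univ.erase k, (x k - x j) ^ 2) := by
  have hinj : Function.Injective x := hx.injective
  set Qk : Fin n → ℝ[X] := fun k => ∏ j ∈ Finset.univ.erase k, (X - C (x j)) with hQk
  set S : ℝ[X] := ∑ k, C (r k) * Qk k ^ 2 with hS
  set a : Fin n → ℝ := fun k => ∏ j ∈ Finset.univ.erase k, (x k - x j) with ha
  set b : Fin n → ℝ := fun k => (derivative (Qk k)).eval (x k) with hb
  have ha_ne : ∀ k, a k ≠ 0 := fun k =>
    Finset.prod_ne_zero_iff.2 fun j hj =>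
      sub_ne_zero.2 fun h => (Finset.mem_erase.1 hj).1 (hinj h.symm)
  have hQk_eval : ∀ k, (Qk k).eval (x k) = a k := fun k => by
    simp [hQk, ha, eval_prod]
  have hQk_eval_zero : ∀ k m, m ≠ k → (Qk m).eval (x k) = 0 := fun k m hmk => by
    rw [hQk, eval_prod]
    exact Finset.prod_eq_zero (Finset.mem_erase.2 ⟨Ne.symm hmk, Finset.mem_univ k⟩) (by simp)
  have hQfac : ∀ k, Q = (X - C (x k)) * Qk k := fun k => by
    rw [hQ, hQk, ← Finset.mul_prod_erase _ _ (Finset.mem_univ k)]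
  have hQ'fac : ∀ k, derivative Q = Qk k + (X - C (x k)) * derivative (Qk k) := fun k => by
    rw [hQfac k, derivative_mul, derivative_sub, derivative_X, derivative_C, sub_zero, one_mul]
  have hQ'eval : ∀ k, (derivative Q).eval (x k) = a k := fun k => by
    rw [hQ'fac k]; simp [hQk_eval k]
  have hQ''eval : ∀ k, (derivative (derivative Q)).eval (x k) = 2 * b k := fun k => by
    rw [hQ'fac k, derivative_add, derivative_mul, derivative_sub, derivative_X, derivative_C,
      sub_zero, one_mul]
    simp [hb]; ring
  have hSeval : ∀ k, S.eval (x k) = r k * a k ^ 2 := fun k => by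
    rw [hS, eval_finset_sum]
    rw [Finset.sum_eq_single k (fun m _ hmk => by simp [hQk_eval_zero k m hmk])
      (fun h => absurd (Finset.mem_univ k) h)]
    simp [hQk_eval k]
  have hS'eval : ∀ k, (derivative S).eval (x k) = 2 * r k * a k * b k := fun k => by
    rw [hS, derivative_sum]
    rw [eval_finset_sum]
    rw [Finset.sum_eq_single k
      (fun m _ hmk => by
        rw [derivative_mul, derivative_C, zero_mul, zero_add, derivative_pow]
        simp [hQk_eval_zero k m hmk])
      (fun h => absurd (Finset.mem_univ k) h)]
    rw [derivative_mul, derivative_C, zero_mul, zero_add, derivative_pow]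
    simp [hQk_eval k, hb]; ring
  -- degrees and monicity
  have hQm : Q.Monic := hQ ▸ monic_prod_of_monic _ _ fun k _ => monic_X_sub_C _
  have hQdeg : Q.natDegree = n := by
    rw [hQ, natDegree_prod _ _ fun k _ => X_sub_C_ne_zero (x k)]
    simp
  have hQkm : ∀ k, (Qk k).Monic := fun k =>
    monic_prod_of_monic _ _ fun j _ => monic_X_sub_C _
  have hQkdeg : ∀ k, (Qk k).natDegree = n - 1 := fun k => by
    rw [hQk, natDegree_prod _ _ fun j _ => X_sub_C_ne_zero (x j)]
    simp [Finset.card_erase_of_mem]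
  have hQk2deg : ∀ k, ((Qk k) ^ 2).natDegree = 2 * n - 2 := fun k => by
    rw [natDegree_pow, hQkdeg k]; omega
  -- P is monic of natDegree 2n-2
  have hinjC : Function.Injective (algebraMap ℝ ℂ) := (algebraMap ℝ ℂ).injective
  have hRHSm : (∏ j : Fin (n-1), ((X : ℂ[X]) - C (ζ j)) * (X - C (conj (ζ j)))).Monic :=
    monic_prod_of_monic _ _ fun j _ => (monic_X_sub_C _).mul (monic_X_sub_C _)
  have hPdeg : P.natDegree = 2 * n - 2 := by
    have h1 := natDegree_map_eq_of_injective hinjC P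
    rw [hP] at h1
    rw [← h1, natDegree_prod _ _ fun j _ => ((monic_X_sub_C (ζ j)).mul
      (monic_X_sub_C (conj (ζ j)))).ne_zero]
    have : ∀ j : Fin (n-1), (((X : ℂ[X]) - C (ζ j)) * (X - C (conj (ζ j)))).natDegree = 2 :=
      fun j => by
        rw [natDegree_mul (X_sub_C_ne_zero _) (X_sub_C_ne_zero _), natDegree_X_sub_C,
          natDegree_X_sub_C]
    rw [Finset.sum_congr rfl fun j _ => this j]
    simp; omega
  have hPm : P.Monic := by
    have h1 : (P.map (algebraMap ℝ ℂ)).leadingCoeff = algebraMap ℝ ℂ P.leadingCoeff := by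
      rw [Polynomial.leadingCoeff, Polynomial.leadingCoeff,
        natDegree_map_eq_of_injective hinjC, coeff_map]
    have h2 := hRHSm
    rw [← hP, Polynomial.Monic, h1] at h2
    exact hinjC (by rw [h2, map_one])
  have hPcoeff : P.coeff (2 * n - 2) = 1 := by rw [← hPdeg]; exact hPm.coeff_natDegree
  have hScoeff : S.coeff (2 * n - 2) = ∑ k, r k := by
    rw [hS, finset_sum_coeff]
    refine Finset.sum_congr rfl fun k _ => ?_
    rw [coeff_C_mul]
    have : ((Qk k) ^ 2).coeff (2 * n - 2) = 1 := by
      rw [← hQk2deg k]; exact ((hQkm k).pow 2).coeff_natDegree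
    rw [this, mul_one]
  have hSdegle : S.natDegree ≤ 2 * n - 2 :=
    natDegree_sum_le_of_forall_le _ _ fun k _ =>
      (natDegree_C_mul_le _ _).trans (le_of_eq (hQk2deg k))
  -- bridge: off the poles, Q(s)^2 * f'(s) = S(s)
  have hbridge : ∀ s : ℝ, (∀ k, s ≠ x k) → Q.eval s ^ 2 * deriv f s = S.eval s := by
    intro s hs
    rw [hf, deriv_aux x r hs, hS, eval_finset_sum, Finset.mul_sum]
    refine Finset.sum_congr rfl fun k _ => ?_
    have h2 : s - x k ≠ 0 := sub_ne_zero.2 (hs k)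
    have hfs : Q.eval s = (s - x k) * (Qk k).eval s := by
      rw [hQfac k]; simp
    rw [hfs]
    simp only [eval_mul, eval_C, eval_pow]
    field_simp
  
  have hiff1 : (∀ s : ℝ, (∀ k, s ≠ x k) → Q.eval s ^ 2 * deriv f s = (∑ k, r k) * P.eval s)
      ↔ S = C (∑ k, r k) * P := by
    constructor
    · intro H
      apply Polynomial.eq_of_infinite_eval_eq
      refine ((Set.finite_range x).infinite_compl).mono ?_
      intro s hs
      have hs' : ∀ k, s ≠ x k := fun k h => hs ⟨k, h.symm⟩
      have h1 := H s hs'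
      rw [hbridge s hs'] at h1
      simp only [Set.mem_setOf_eq, eval_mul, eval_C]
      exact h1
    · intro H s hs
      rw [hbridge s hs, H, eval_mul, eval_C]
  rw [hiff1]
  constructor
  · -- forward direction
    intro hSP
    set c := ∑ k, r k with hc
    have hne : Nonempty (Fin n) := ⟨⟨0, by omega⟩⟩
    have hcpos : 0 < c := Finset.sum_pos (fun k _ => hr k) Finset.univ_nonempty
    have hPk : ∀ k, c * P.eval (x k) = r k * a k ^ 2 := fun k => by
      have h1 := congrArg (Polynomial.eval (x k)) hSP
      rw [hSeval k] at h1
      simp only [eval_mul, eval_C] at h1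
      linarith
    have hP'k : ∀ k, c * (derivative P).eval (x k) = 2 * r k * a k * b k := fun k => by
      have h1 := congrArg (fun p => (derivative p).eval (x k)) hSP
      simp only [derivative_mul, derivative_C, zero_mul, zero_add] at h1
      rw [hS'eval k] at h1
      simp only [eval_mul, eval_C] at h1
      linarith
    have hDk : ∀ k, (P * derivative (derivative Q) - derivative P * derivative Q).IsRoot (x k) := by
      intro k
      have h1 : c * (P * derivative (derivative Q) - derivative P * derivative Q).eval (x k) = 0 := by
        simp only [eval_sub, eval_mul]
        rw [hQ'eval k, hQ''eval k]
        linear_combination (2 * b k) * hPk k - a k * hP'k k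
      have h2 := mul_eq_zero.1 h1
      exact h2.resolve_left (ne_of_gt hcpos)
    have hdvd : Q ∣ P * derivative (derivative Q) - derivative P * derivative Q := by
      have h := Finset.prod_dvd_of_coprime
        ((Polynomial.pairwise_coprime_X_sub_C hinj).set_pairwise (↑(Finset.univ : Finset (Fin n))))
        (fun k _ => dvd_iff_isRoot.2 (hDk k))
      rwa [← hQ] at h
    -- degree computations
    have cQn : Q.coeff n = 1 := by rw [← hQdeg]; exact hQm.coeff_natDegree
    have cQ' : (derivative Q).coeff (n - 1) = (n : ℝ) := by
      rw [coeff_derivative, show n - 1 + 1 = n by omega, cQn, one_mul,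
        Nat.cast_sub (by omega : 1 ≤ n)]
      ring
    have hQ'le : (derivative Q).natDegree ≤ n - 1 := by
      have h := natDegree_derivative_le Q; omega
    have cQ'' : (derivative (derivative Q)).coeff (n - 2) = (n : ℝ) * ((n : ℝ) - 1) := by
      rw [coeff_derivative, show n - 2 + 1 = n - 1 by omega, cQ',
        Nat.cast_sub (by omega : 2 ≤ n)]
      push_cast
      ring
    have hQ''le : (derivative (derivative Q)).natDegree ≤ n - 2 := by
      have h := natDegree_derivative_le (derivative Q); omega
    have hPle : P.natDegree ≤ 2 * n - 2 := le_of_eq hPdeg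
    have cP' : (derivative P).coeff (2 * n - 3) = 2 * (n : ℝ) - 2 := by
      rw [coeff_derivative, show 2 * n - 3 + 1 = 2 * n - 2 by omega, hPcoeff, one_mul,
        Nat.cast_sub (by omega : 3 ≤ 2 * n)]
      push_cast
      ring
    have hP'le : (derivative P).natDegree ≤ 2 * n - 3 := by
      have h := natDegree_derivative_le P; omega
    have cD : (P * derivative (derivative Q) - derivative P * derivative Q).coeff (3 * n - 4)
        = -((n : ℝ) * ((n : ℝ) - 1)) := by
      have hA : (P * derivative (derivative Q)).coeff (3 * n - 4)
          = P.coeff (2 * n - 2) * (derivative (derivative Q)).coeff (n - 2) := by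
        rw [show 3 * n - 4 = (2 * n - 2) + (n - 2) by omega]
        exact coeff_mul_add_eq_of_natDegree_le hPle hQ''le
      have hB : (derivative P * derivative Q).coeff (3 * n - 4)
          = (derivative P).coeff (2 * n - 3) * (derivative Q).coeff (n - 1) := by
        rw [show 3 * n - 4 = (2 * n - 3) + (n - 1) by omega]
        exact coeff_mul_add_eq_of_natDegree_le hP'le hQ'le
      rw [coeff_sub, hA, hB, hPcoeff, cQ'', cP', cQ']
      ring
    have hnne : (n : ℝ) * ((n : ℝ) - 1) ≠ 0 := by
      have h2 : (2 : ℝ) ≤ (n : ℝ) := by exact_mod_cast hn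
      nlinarith
    have hDne : P * derivative (derivative Q) - derivative P * derivative Q ≠ 0 := by
      intro h
      rw [h, coeff_zero] at cD
      exact hnne (by linarith)
    have hDle : (P * derivative (derivative Q) - derivative P * derivative Q).natDegree
        ≤ 3 * n - 4 := by
      refine (natDegree_sub_le _ _).trans (max_le ?_ ?_)
      · exact natDegree_mul_le.trans (by omega)
      · exact natDegree_mul_le.trans (by omega)
    have hDdeg : (P * derivative (derivative Q) - derivative P * derivative Q).natDegree
        = 3 * n - 4 :=
      le_antisymm hDle (le_natDegree_of_ne_zero (by rw [cD]; exact neg_ne_zero.2 hnne))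
    obtain ⟨R0, hR0⟩ := hdvd
    have hQne : Q ≠ 0 := hQm.ne_zero
    have hR0ne : R0 ≠ 0 := by
      rintro rfl
      rw [mul_zero] at hR0
      exact hDne hR0
    have hR0deg : R0.natDegree = 2 * n - 4 := by
      have h := natDegree_mul hQne hR0ne
      rw [← hR0, hDdeg, hQdeg] at h
      omega
    refine ⟨-R0, c, ?_, hcpos, ?_, ?_⟩
    · rw [degree_neg, degree_eq_natDegree hR0ne, hR0deg]
    · rw [hR0]; ring
    · intro k
      have e : (∏ j ∈ Finset.univ.erase k, (x k - x j) ^ 2) = a k ^ 2 := by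
        simp only [ha]
        exact Finset.prod_pow _ _ _
      rw [e, eq_div_iff (pow_ne_zero 2 (ha_ne k))]
      linarith [hPk k]
  · -- backward direction
    rintro ⟨R, c, hRdeg, hcpos, hode, hrk⟩
    have hPk : ∀ k, r k * a k ^ 2 = c * P.eval (x k) := fun k => by
      have h := hrk k
      have e : (∏ j ∈ Finset.univ.erase k, (x k - x j) ^ 2) = a k ^ 2 := by
        simp only [ha]
        exact Finset.prod_pow _ _ _
      rw [e] at h
      rw [h, div_mul_cancel₀ _ (pow_ne_zero 2 (ha_ne k))]
    have hP'k : ∀ k, 2 * r k * a k * b k = c * (derivative P).eval (x k) := by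
      intro k
      have h := congrArg (Polynomial.eval (x k)) hode
      simp only [eval_add, eval_sub, eval_mul, eval_zero] at h
      rw [hQ'eval k, hQ''eval k] at h
      have hq0 : Q.eval (x k) = 0 := by rw [hQfac k]; simp
      rw [hq0, mul_zero, add_zero] at h
      have key : (2 * r k * a k * b k - c * (derivative P).eval (x k)) * a k = 0 := by
        linear_combination (2 * b k) * hPk k + c * h
      have h2 := (mul_eq_zero.1 key).resolve_right (ha_ne k)
      linarith
    have hT : S = C c * P := by
      have hdvd2 : Q ^ 2 ∣ S - C c * P := by
        rw [hQ, ← Finset.prod_pow]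
        have hpair : Pairwise (Function.onFun IsCoprime fun k : Fin n => (X - C (x k)) ^ 2) :=
          fun i j hij => IsCoprime.pow (Polynomial.pairwise_coprime_X_sub_C hinj hij)
        refine Finset.prod_dvd_of_coprime (hpair.set_pairwise _) fun k _ => ?_
        apply sq_dvd_aux
        · rw [eval_sub, hSeval k]
          simp only [eval_mul, eval_C]
          linarith [hPk k]
        · rw [derivative_sub, eval_sub, hS'eval k, derivative_mul, derivative_C, zero_mul,
            zero_add]
          simp only [eval_mul, eval_C]
          linarith [hP'k k]
      have hTle : (S - C c * P).natDegree ≤ 2 * n - 2 :=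
        (natDegree_sub_le _ _).trans
          (max_le hSdegle ((natDegree_C_mul_le _ _).trans (le_of_eq hPdeg)))
      have h0 : S - C c * P = 0 := by
        refine eq_zero_of_dvd_of_degree_lt hdvd2 ?_
        have hQ2 : (Q ^ 2).degree = ((2 * n : ℕ) : WithBot ℕ) := by
          rw [degree_eq_natDegree (hQm.pow 2).ne_zero, natDegree_pow, hQdeg]
        rw [hQ2]
        calc (S - C c * P).degree ≤ ((2 * n - 2 : ℕ) : WithBot ℕ) :=
              degree_le_natDegree.trans (by exact_mod_cast hTle)
          _ < ((2 * n : ℕ) : WithBot ℕ) := by exact_mod_cast (by omega : 2 * n - 2 < 2 * n)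
      exact sub_eq_zero.1 h0
    have hsum : (∑ k, r k) = c := by
      have h := congrArg (fun p => Polynomial.coeff p (2 * n - 2)) hT
      rw [hScoeff, coeff_C_mul, hPcoeff, mul_one] at h
      exact h
    rw [hT, hsum]
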